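/- Let T : ℝ₊^N → ℝ₊₊^N be continuous and concave (each coordinate function concave on ℝ₊^N), and let x* ∈ ℝ₊^N satisfy T(x*) = x*. For each d ∈ ℝ₊^N the function t ↦ T(td)/t is coordinatewise nonincreasing on (0,∞), so the asymptotic mapping S(d) := lim_{t→∞} T(td)/t exists in ℝ₊^N. Suppose v ∈ ℝ₊^N \ {0} and ρ ≥ 0 satisfy S(v) = ρv. Then for every n ≥ 1 and every ε > 0, the n-fold iterate of T satisfies T^n(x* + εv) ≥ x* + ρ^n ε v. -/

import Mathlib

open Filter Topology

/-- Let `T : ℝ₊^N → ℝ₊₊^N` be continuous and concave with fixed point `x*`, let `S` be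
its asymptotic mapping (given via the `Tendsto` hypothesis `S(d) = lim_{t→∞} T(td)/t`),
and suppose `S(v) = ρv` for some `v ∈ ℝ₊^N \ {0}` and `ρ ≥ 0`. Then for every `n ≥ 1`
and `ε > 0`: `T^n(x* + εv) ≥ x* + ρ^n ε v`. -/
theorem stmt_11 (N : ℕ) (hN : 1 ≤ N)
    (T : (Fin N → ℝ) → (Fin N → ℝ))
    (hT_pos : ∀ x : Fin N → ℝ, (∀ i, 0 ≤ x i) → ∀ i, 0 < T x i)
    (hT_cont : ContinuousOn T {x : Fin N → ℝ | ∀ i, 0 ≤ x i})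
    (hT_conc : ∀ i : Fin N, ConcaveOn ℝ {x : Fin N → ℝ | ∀ j, 0 ≤ x j} (fun x => T x i))
    (xstar : Fin N → ℝ) (hxstar : ∀ i, 0 ≤ xstar i)
    (hfix : T xstar = xstar)
    (S : (Fin N → ℝ) → (Fin N → ℝ))
    (hS : ∀ d : Fin N → ℝ, (∀ i, 0 ≤ d i) →
      Tendsto (fun t : ℝ => t⁻¹ • T (t • d)) atTop (𝓝 (S d)))
    (v : Fin N → ℝ) (hv_nonneg : ∀ i, 0 ≤ v i) (hv_ne : v ≠ 0)
    (ρ : ℝ) (hρ : 0 ≤ ρ) (heig : S v = ρ • v) :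
    ∀ n : ℕ, 1 ≤ n → ∀ ε : ℝ, 0 < ε →
      xstar + (ρ ^ n * ε) • v ≤ T^[n] (xstar + ε • v) := by
  -- Monotonicity of T on the nonnegative orthant
  have hmono : ∀ x y : Fin N → ℝ, (∀ i, 0 ≤ x i) → x ≤ y → ∀ i, T x i ≤ T y i := by
    intro x y hx hxy i
    have hy : ∀ j, 0 ≤ y j := fun j => le_trans (hx j) (hxy j)
    have key : ∀ s : ℝ, 1 ≤ s → (1 - s⁻¹) * T x i ≤ T y i := by
      intro s hs
      have hs0 : (0:ℝ) < s := lt_of_lt_of_le one_pos hs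
      set z := x + s • (y - x) with hz_def
      have hz : ∀ j, 0 ≤ z j := by
        intro j
        have h1 : 0 ≤ y j - x j := sub_nonneg.2 (hxy j)
        have : z j = x j + s * (y j - x j) := rfl
        rw [this]
        exact add_nonneg (hx j) (mul_nonneg hs0.le h1)
      have hcomb : (1 - s⁻¹) • x + s⁻¹ • z = y := by
        funext j
        have : s⁻¹ * s = 1 := inv_mul_cancel₀ hs0.ne'
        simp only [hz_def, Pi.add_apply, Pi.smul_apply, Pi.sub_apply, smul_eq_mul]
        linear_combination (y j - x j) * this
      have hsi : (0:ℝ) ≤ s⁻¹ := inv_nonneg.2 hs0.le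
      have hsi1 : s⁻¹ ≤ 1 := by
        rw [inv_le_one_iff₀]; right; exact hs
      have hc := (hT_conc i).2 hx hz (by linarith : (0:ℝ) ≤ 1 - s⁻¹) hsi (by ring)
      rw [hcomb] at hc
      simp only [smul_eq_mul] at hc
      have hTz : 0 < T z i := hT_pos z hz i
      nlinarith
    have hlim : Tendsto (fun s : ℝ => (1 - s⁻¹) * T x i) atTop (𝓝 (T x i)) := by
      have h1 : Tendsto (fun s : ℝ => (1 - s⁻¹)) atTop (𝓝 1) := by
        have h0 := (tendsto_inv_atTop_zero (𝕜 := ℝ)).const_sub 1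
        simpa using h0
      simpa using h1.mul (tendsto_const_nhds : Tendsto (fun _ : ℝ => T x i) atTop _)
    exact le_of_tendsto hlim (eventually_atTop.2 ⟨1, key⟩)
  -- Key one-step inequality
  have hkey : ∀ ε : ℝ, 0 ≤ ε → ∀ i, xstar i + (ρ * ε) * v i ≤ T (xstar + ε • v) i := by
    intro ε hε i
    rcases eq_or_lt_of_le hε with h | hε
    · subst h; simp [hfix]
    -- ε > 0
    have hlim : Tendsto (fun t : ℝ => (1 - ε * t⁻¹) * xstar i + ε * (t⁻¹ * T (t • v) i))
        atTop (𝓝 (xstar i + ε * (ρ * v i))) := by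
      have h1 : Tendsto (fun t : ℝ => (1 - ε * t⁻¹)) atTop (𝓝 1) := by
        have h0 := ((tendsto_inv_atTop_zero (𝕜 := ℝ)).const_mul ε).const_sub 1
        simpa using h0
      have h2 : Tendsto (fun t : ℝ => t⁻¹ * T (t • v) i) atTop (𝓝 (S v i)) := by
        have := ((continuous_apply i).tendsto (S v)).comp (hS v hv_nonneg)
        simpa [Function.comp_def] using this
      have h3 : S v i = ρ * v i := by rw [heig]; rfl
      have := (h1.mul (tendsto_const_nhds : Tendsto (fun _ : ℝ => xstar i) atTop _)).add
        ((tendsto_const_nhds (x := ε)).mul h2)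
      simpa [h3] using this
    have hgoal : xstar i + ρ * ε * v i = xstar i + ε * (ρ * v i) := by ring
    rw [hgoal]
    refine le_of_tendsto hlim (eventually_atTop.2 ⟨max ε 1, ?_⟩)
    intro t ht
    have ht1 : (1:ℝ) ≤ t := le_trans (le_max_right _ _) ht
    have htε : ε ≤ t := le_trans (le_max_left _ _) ht
    have ht0 : (0:ℝ) < t := lt_of_lt_of_le one_pos ht1
    have htv : ∀ j, 0 ≤ (t • v) j := fun j => mul_nonneg ht0.le (hv_nonneg j)
    have hxtv : ∀ j, 0 ≤ (xstar + t • v) j := fun j => add_nonneg (hxstar j) (htv j)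
    have hlam : (0:ℝ) ≤ ε * t⁻¹ := mul_nonneg hε.le (inv_nonneg.2 ht0.le)
    have hlam1 : ε * t⁻¹ ≤ 1 := by
      rw [← div_eq_mul_inv, div_le_one ht0]; exact htε
    have hcomb : (1 - ε * t⁻¹) • xstar + (ε * t⁻¹) • (xstar + t • v) = xstar + ε • v := by
      funext j
      have hti : t⁻¹ * t = 1 := inv_mul_cancel₀ ht0.ne'
      simp only [Pi.add_apply, Pi.smul_apply, smul_eq_mul]
      linear_combination ε * v j * hti
    have hc := (hT_conc i).2 hxstar hxtv (by linarith : (0:ℝ) ≤ 1 - ε * t⁻¹) hlam (by ring)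
    rw [hcomb] at hc
    simp only [smul_eq_mul, hfix] at hc
    have hm : T (t • v) i ≤ T (xstar + t • v) i := by
      refine hmono (t • v) (xstar + t • v) htv (fun j => ?_) i
      simp only [Pi.add_apply]
      linarith [hxstar j]
    calc (1 - ε * t⁻¹) * xstar i + ε * (t⁻¹ * T (t • v) i)
        ≤ (1 - ε * t⁻¹) * xstar i + (ε * t⁻¹) * T (xstar + t • v) i := by
          have : ε * (t⁻¹ * T (t • v) i) ≤ (ε * t⁻¹) * T (xstar + t • v) i := by
            rw [mul_assoc]
            exact mul_le_mul_of_nonneg_left (mul_le_mul_of_nonneg_left hm (inv_nonneg.2 ht0.le)) hε.le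
          linarith
      _ ≤ T (xstar + ε • v) i := hc
  -- Main induction
  intro n hn ε hε
  induction n with
  | zero => omega
  | succ n ih =>
    rcases Nat.eq_zero_or_pos n with rfl | hn'
    · intro i
      simp only [Pi.add_apply, Pi.smul_apply, smul_eq_mul]
      rw [show (0:ℕ)+1 = 1 from rfl, Function.iterate_one, pow_one]
      exact hkey ε hε.le i
    · have h1 := ih hn'
      have hnn : ∀ j, 0 ≤ (xstar + (ρ ^ n * ε) • v) j := fun j =>
        add_nonneg (hxstar j) (mul_nonneg (mul_nonneg (pow_nonneg hρ n) hε.le) (hv_nonneg j))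
      have step : ∀ i, (xstar + (ρ ^ (n+1) * ε) • v) i ≤ T (xstar + (ρ ^ n * ε) • v) i := by
        intro i
        have := hkey (ρ ^ n * ε) (mul_nonneg (pow_nonneg hρ n) hε.le) i
        simp only [Pi.add_apply, Pi.smul_apply, smul_eq_mul]
        calc xstar i + ρ ^ (n+1) * ε * v i = xstar i + (ρ * (ρ ^ n * ε)) * v i := by ring
          _ ≤ _ := this
      intro i
      rw [Function.iterate_succ_apply']
      calc (xstar + (ρ ^ (n+1) * ε) • v) i ≤ T (xstar + (ρ ^ n * ε) • v) i := step i
        _ ≤ T (T^[n] (xstar + ε • v)) i := hmono _ _ hnn h1 i
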